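/- Let φ be a continuous kernel with ∑_{k∈ℤ} φ(e^{-k}u) = 1 for all u > 0, with all algebraic moments m_j(φ) := ∑_k φ(e^{-k}x)(k − log x)^j independent of x for 0 ≤ j ≤ n, with M_n(φ) := sup_x ∑_k |φ(e^{-k}x)||k − log x|^n < ∞, and with ∑_{|k−log u|>r} |φ(e^{-k}u)||k − log u|^n → 0 uniformly in u as r → ∞. If f ∈ C(ℝ⁺) is n-times differentiable at x > 0 (of class C^{(n)} locally at x), then (S_w^φ f)(x) − f(x) = ∑_{j=1}^{n} (Θ^j f)(x)/j! · m_j(φ)/w^j + o(w^{-n}) as w → +∞, where Θ is the Mellin derivative Θf(x) = x f'(x). -/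

import Mathlib

open Real Filter Asymptotics

/-- The generalized exponential sampling operator. -/
noncomputable def expSampling (φ f : ℝ → ℝ) (w x : ℝ) : ℝ :=
  ∑' k : ℤ, f (Real.exp (k / w)) * φ (Real.exp (-k) * x ^ w)

/-- The Mellin differential operator (with `c = 0`): `Θf(x) = x f'(x)`. -/
noncomputable def mellinD (f : ℝ → ℝ) : ℝ → ℝ := fun x => x * deriv f x

/-- `f` is of class `C^{(n)}` locally at `x`: `f` is `(n-1)`-times differentiable in a
neighbourhood of `x` and the `n`-th derivative exists at `x`. -/
def LocallyCn (n : ℕ) (f : ℝ → ℝ) (x : ℝ) : Prop :=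
  (∀ m < n - 1, ∀ᶠ y in nhds x, DifferentiableAt ℝ (iteratedDeriv m f) y) ∧
    DifferentiableAt ℝ (iteratedDeriv (n - 1) f) x


-- Auxiliary lemmas

lemma taylor_peano : ∀ (n : ℕ) (g : ℝ → ℝ) (a : ℝ),
    (∀ m < n, ∀ᶠ y in nhds a, DifferentiableAt ℝ (iteratedDeriv m g) y) →
    DifferentiableAt ℝ (iteratedDeriv n g) a →
    (fun s : ℝ => g (a + s) -
        ∑ j ∈ Finset.range (n + 2), iteratedDeriv j g a * s ^ j / (j.factorial : ℝ))
      =o[nhds 0] fun s : ℝ => s ^ (n + 1) := by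
  intro n
  induction n with
  | zero =>
    intro g a _ h2
    rw [iteratedDeriv_zero] at h2
    have h := hasDerivAt_iff_isLittleO.mp h2.hasDerivAt
    have ht : Tendsto (fun s : ℝ => a + s) (nhds 0) (nhds a) := by
      simpa using (continuous_add_left a).tendsto (0:ℝ)
    have h' := h.comp_tendsto ht
    refine (h'.congr ?_ ?_)
    · intro s
      simp [Finset.sum_range_succ, iteratedDeriv_one, Nat.factorial]
      ring
    · intro s; simp
  | succ n ih =>
    intro g a h1 h2
    -- apply IH to deriv g
    have h1' : ∀ m < n, ∀ᶠ y in nhds a, DifferentiableAt ℝ (iteratedDeriv m (deriv g)) y := by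
      intro m hm
      have := h1 (m + 1) (by omega)
      simpa [iteratedDeriv_succ'] using this
    have h2' : DifferentiableAt ℝ (iteratedDeriv n (deriv g)) a := by
      rw [← iteratedDeriv_succ']; exact h2
    have hE := ih (deriv g) a h1' h2'
    -- eventual differentiability of g near a
    have hg : ∀ᶠ y in nhds a, DifferentiableAt ℝ g y := by
      have := h1 0 (by omega)
      simpa [iteratedDeriv_zero] using this
    rw [isLittleO_iff]
    intro c hc
    -- get δ from hE and hg
    have hE' : ∀ᶠ s in nhds (0:ℝ), |deriv g (a + s) -
        ∑ j ∈ Finset.range (n + 2), iteratedDeriv j (deriv g) a * s ^ j / (j.factorial : ℝ)|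
        ≤ c * |s| ^ (n + 1) := by
      have := (isLittleO_iff.mp hE) hc
      filter_upwards [this] with s hs
      simpa [abs_pow] using hs
    have hg' : ∀ᶠ s in nhds (0:ℝ), DifferentiableAt ℝ g (a + s) := by
      have ht : Tendsto (fun s : ℝ => a + s) (nhds 0) (nhds a) := by
        simpa using (continuous_add_left a).tendsto (0:ℝ)
      exact ht.eventually hg
    obtain ⟨δ, hδpos, hδ⟩ := Metric.eventually_nhds_iff.mp (hE'.and hg')
    rw [Metric.eventually_nhds_iff]
    refine ⟨δ, hδpos, ?_⟩
    intro s hs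
    simp only [Real.dist_eq, sub_zero] at hs
    -- define F and E
    set F : ℝ → ℝ := fun t => g (a + t) -
        ∑ j ∈ Finset.range (n + 3), iteratedDeriv j g a * t ^ j / (j.factorial : ℝ) with hF
    set E : ℝ → ℝ := fun t => deriv g (a + t) -
        ∑ j ∈ Finset.range (n + 2), iteratedDeriv j (deriv g) a * t ^ j / (j.factorial : ℝ) with hEdef
    have hF0 : F 0 = 0 := by
      simp only [hF]
      rw [Finset.sum_eq_single 0]
      · simp
      · intro j _ hj
        rcases Nat.exists_eq_succ_of_ne_zero hj with ⟨i, rfl⟩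
        simp
      · simp
    have hFderiv : ∀ t ∈ Set.uIcc 0 s, HasDerivWithinAt F (E t) (Set.uIcc 0 s) t := by
      intro t ht
      have htδ : |t| < δ := by
        have h1 : |t| ≤ |s| := by
          rcases Set.mem_uIcc.mp ht with ⟨h, h'⟩ | ⟨h, h'⟩ <;> rw [abs_le] <;>
            constructor <;> nlinarith [abs_nonneg s, le_abs_self s, neg_abs_le s]
        linarith
      obtain ⟨_, hgdiff⟩ := hδ (by simpa [Real.dist_eq] using htδ)
      have hg1 : HasDerivAt (fun t : ℝ => g (a + t)) (deriv g (a + t)) t := by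
        have := (hgdiff.hasDerivAt).comp t ((hasDerivAt_id t).const_add a)
        simpa [Function.comp_def] using this
      have hp : HasDerivAt (fun t : ℝ => ∑ j ∈ Finset.range (n + 3),
          iteratedDeriv j g a * t ^ j / (j.factorial : ℝ))
          (∑ j ∈ Finset.range (n + 2), iteratedDeriv j (deriv g) a * t ^ j / (j.factorial : ℝ)) t := by
        have : HasDerivAt (fun t : ℝ => ∑ j ∈ Finset.range (n + 3),
            iteratedDeriv j g a * t ^ j / (j.factorial : ℝ))
            (∑ j ∈ Finset.range (n + 3),
              iteratedDeriv j g a * ((j : ℝ) * t ^ (j - 1)) / (j.factorial : ℝ)) t := by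
          refine HasDerivAt.fun_sum fun j _ => ?_
          simpa [mul_div_assoc] using
            ((hasDerivAt_pow j t).const_mul (iteratedDeriv j g a)).div_const (j.factorial : ℝ)
        convert this using 1
        rw [Finset.sum_range_succ' (fun j => iteratedDeriv j g a * ((j:ℝ) * t ^ (j-1)) / (j.factorial : ℝ)) (n+2)]
        simp only [Nat.cast_zero, zero_mul, mul_zero, zero_div, add_zero, Nat.cast_succ]
        refine Finset.sum_congr rfl fun j _ => ?_
        rw [iteratedDeriv_succ']
        have : ((j+1).factorial : ℝ) = (j+1) * (j.factorial : ℝ) := by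
          push_cast [Nat.factorial_succ]; ring
        rw [this]
        have hj0 : (j.factorial : ℝ) ≠ 0 := Nat.cast_ne_zero.mpr j.factorial_ne_zero
        field_simp
        simp
      exact (hg1.sub hp).hasDerivWithinAt
    have hbound : ∀ t ∈ Set.uIcc 0 s, ‖E t‖ ≤ c * |s| ^ (n + 1) := by
      intro t ht
      have htδ : |t| < δ := by
        have h1 : |t| ≤ |s| := by
          rcases Set.mem_uIcc.mp ht with ⟨h, h'⟩ | ⟨h, h'⟩ <;> rw [abs_le] <;>
            constructor <;> nlinarith [abs_nonneg s, le_abs_self s, neg_abs_le s]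
        linarith
      obtain ⟨hEb, _⟩ := hδ (by simpa [Real.dist_eq] using htδ)
      refine hEb.trans ?_
      have h1 : |t| ≤ |s| := by
        rcases Set.mem_uIcc.mp ht with ⟨h, h'⟩ | ⟨h, h'⟩ <;> rw [abs_le] <;>
          constructor <;> nlinarith [abs_nonneg s, le_abs_self s, neg_abs_le s]
      exact mul_le_mul_of_nonneg_left (pow_le_pow_left₀ (abs_nonneg t) h1 _) hc.le
    have := Convex.norm_image_sub_le_of_norm_hasDerivWithin_le hFderiv hbound
      (convex_uIcc 0 s) (Set.left_mem_uIcc) (Set.right_mem_uIcc)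
    rw [hF0, sub_zero] at this
    calc ‖F s‖ ≤ c * |s| ^ (n + 1) * ‖s - 0‖ := this
      _ = c * ‖s ^ (n + 1 + 1)‖ := by
          rw [sub_zero]; simp [abs_pow, Real.norm_eq_abs]; ring


def stir : ℕ → ℕ → ℕ
  | 0, 0 => 1
  | 0, _ + 1 => 0
  | _ + 1, 0 => 0
  | m + 1, k + 1 => (k + 1) * stir m (k + 1) + stir m k

lemma stir_eq_zero : ∀ m k, m < k → stir m k = 0 := by
  intro m
  induction m with
  | zero => intro k hk; rcases Nat.exists_eq_succ_of_ne_zero (by omega : k ≠ 0) with ⟨i, rfl⟩; rfl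
  | succ m ih =>
    intro k hk
    rcases Nat.exists_eq_succ_of_ne_zero (by omega : k ≠ 0) with ⟨i, rfl⟩
    show (i + 1) * stir m (i + 1) + stir m i = 0
    rw [ih (i+1) (by omega), ih i (by omega)]
    simp

lemma mellin_iter_eq (f : ℝ → ℝ) (U : Set ℝ) (hU : IsOpen U) :
    ∀ (m : ℕ), (∀ k < m, ∀ y ∈ U, DifferentiableAt ℝ (iteratedDeriv k f) y) →
    ∀ y ∈ U, mellinD^[m] f y =
      ∑ k ∈ Finset.range (m + 1), (stir m k : ℝ) * y ^ k * iteratedDeriv k f y := by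
  intro m
  induction m with
  | zero =>
    intro _ y _
    simp [stir, iteratedDeriv_zero]
  | succ m ih =>
    intro hdiff y hy
    have ihy := ih (fun k hk => hdiff k (by omega))
    -- the sum function
    set G : ℝ → ℝ := fun z => ∑ k ∈ Finset.range (m + 1),
      (stir m k : ℝ) * z ^ k * iteratedDeriv k f z with hG
    have heq : mellinD^[m] f =ᶠ[nhds y] G := by
      filter_upwards [hU.mem_nhds hy] with z hz using ihy z hz
    have hGd : HasDerivAt G (∑ k ∈ Finset.range (m + 1),
        ((stir m k : ℝ) * ((k : ℝ) * y ^ (k - 1)) * iteratedDeriv k f y +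
          (stir m k : ℝ) * y ^ k * iteratedDeriv (k + 1) f y)) y := by
      refine HasDerivAt.fun_sum fun k hk => ?_
      have hfk : HasDerivAt (iteratedDeriv k f) (iteratedDeriv (k + 1) f y) y := by
        rw [iteratedDeriv_succ]
        exact (hdiff k (Finset.mem_range.mp hk) y hy).hasDerivAt
      have hpow : HasDerivAt (fun z : ℝ => (stir m k : ℝ) * z ^ k)
          ((stir m k : ℝ) * ((k : ℝ) * y ^ (k - 1))) y := (hasDerivAt_pow k y).const_mul _
      simpa [mul_assoc] using hpow.fun_mul hfk
    have : mellinD^[m + 1] f y = y * deriv (mellinD^[m] f) y := by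
      rw [Function.iterate_succ_apply']; rfl
    rw [this, heq.deriv_eq, hGd.deriv]
    -- now pure algebra
    rw [Finset.mul_sum]
    have key : ∀ k ∈ Finset.range (m + 1),
        y * ((stir m k : ℝ) * ((k : ℝ) * y ^ (k - 1)) * iteratedDeriv k f y +
          (stir m k : ℝ) * y ^ k * iteratedDeriv (k + 1) f y)
        = (k : ℝ) * (stir m k : ℝ) * y ^ k * iteratedDeriv k f y +
          (stir m k : ℝ) * y ^ (k + 1) * iteratedDeriv (k + 1) f y := by
      intro k _
      have hyk : y * ((k : ℝ) * y ^ (k - 1)) = (k : ℝ) * y ^ k := by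
        cases k with
        | zero => simp
        | succ i => simp [pow_succ]; ring
      rw [mul_add]
      congr 1
      · calc y * ((stir m k : ℝ) * ((k : ℝ) * y ^ (k - 1)) * iteratedDeriv k f y)
            = (stir m k : ℝ) * (y * ((k : ℝ) * y ^ (k - 1))) * iteratedDeriv k f y := by ring
          _ = _ := by rw [hyk]; ring
      · ring
    rw [Finset.sum_congr rfl key, Finset.sum_add_distrib]
    -- RHS: reindex
    rw [Finset.sum_range_succ' (fun k => (stir (m+1) k : ℝ) * y ^ k * iteratedDeriv k f y) (m + 1)]
    have h0 : (stir (m+1) 0 : ℝ) * y ^ 0 * iteratedDeriv 0 f y = 0 := by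
      show ((0:ℕ) : ℝ) * y ^ 0 * iteratedDeriv 0 f y = 0
      simp
    rw [h0, add_zero]
    have hsucc : ∀ j ∈ Finset.range (m + 1),
        (stir (m+1) (j+1) : ℝ) * y ^ (j+1) * iteratedDeriv (j+1) f y
        = ((j:ℝ) + 1) * (stir m (j+1) : ℝ) * y ^ (j+1) * iteratedDeriv (j+1) f y +
          (stir m j : ℝ) * y ^ (j+1) * iteratedDeriv (j+1) f y := by
      intro j _
      have : (stir (m+1) (j+1) : ℝ) = ((j:ℝ)+1) * (stir m (j+1) : ℝ) + (stir m j : ℝ) := by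
        show ((((j + 1) * stir m (j + 1) + stir m j : ℕ)) : ℝ) = _
        push_cast; ring
      rw [this]; ring
    rw [Finset.sum_congr rfl hsucc, Finset.sum_add_distrib]
    congr 1
    -- first sums: ∑_{k∈range(m+1)} k * stir m k y^k f^{(k)} = ∑_{j∈range(m+1)} (j+1) stir m (j+1) y^{j+1} f^{(j+1)}
    · rw [Finset.sum_range_succ' (fun k => (k : ℝ) * (stir m k : ℝ) * y ^ k * iteratedDeriv k f y) m]
      simp only [Nat.cast_zero, zero_mul, add_zero]
      rw [Finset.sum_range_succ (fun j => ((j:ℝ)+1) * (stir m (j+1) : ℝ) * y ^ (j+1) * iteratedDeriv (j+1) f y) m]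
      rw [stir_eq_zero m (m+1) (by omega)]
      simp only [Nat.cast_zero, mul_zero, zero_mul, add_zero, Nat.cast_ofNat]
      refine (Finset.sum_congr rfl fun j _ => ?_).symm
      push_cast; ring

lemma mellin_transfer (f : ℝ → ℝ) (x : ℝ) (hx : 0 < x) (n' : ℕ)
    (h1 : ∀ m < n', ∀ᶠ y in nhds x, DifferentiableAt ℝ (iteratedDeriv m f) y)
    (h2 : DifferentiableAt ℝ (iteratedDeriv n' f) x) :
    (∀ m < n', ∀ᶠ s in nhds (Real.log x),
        DifferentiableAt ℝ (iteratedDeriv m (fun s => f (Real.exp s))) s) ∧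
    DifferentiableAt ℝ (iteratedDeriv n' (fun s => f (Real.exp s))) (Real.log x) ∧
    (∀ j ≤ n' + 1, iteratedDeriv j (fun s => f (Real.exp s)) (Real.log x) = mellinD^[j] f x) := by
  set g : ℝ → ℝ := fun s => f (Real.exp s) with hg
  set a := Real.log x with ha
  have hxa : Real.exp a = x := Real.exp_log hx
  -- a single open neighbourhood where all iterated derivatives below n' are differentiable
  have hall : ∀ᶠ y in nhds x, ∀ m ∈ Set.Iio n', DifferentiableAt ℝ (iteratedDeriv m f) y :=
    (eventually_all_finite (Set.finite_Iio n')).mpr (fun m hm => h1 m hm)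
  obtain ⟨U, hUsub, hUopen, hxU⟩ := eventually_nhds_iff.mp hall
  have hUdiff : ∀ k < n', ∀ y ∈ U, DifferentiableAt ℝ (iteratedDeriv k f) y :=
    fun k hk y hy => hUsub y hy k hk
  -- differentiability of Mellin iterates
  have Dm : ∀ m < n', ∀ y ∈ U, DifferentiableAt ℝ (mellinD^[m] f) y := by
    intro m hm y hy
    have heq : mellinD^[m] f =ᶠ[nhds y] fun z => ∑ k ∈ Finset.range (m + 1),
        (stir m k : ℝ) * z ^ k * iteratedDeriv k f z := by
      filter_upwards [hUopen.mem_nhds hy] with z hz using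
        mellin_iter_eq f U hUopen m (fun k hk => hUdiff k (by omega)) z hz
    rw [heq.differentiableAt_iff]
    exact DifferentiableAt.fun_sum fun k hk =>
      ((differentiableAt_const _).mul (differentiableAt_pow k)).mul
        (hUdiff k (by have := Finset.mem_range.mp hk; omega) y hy)
  have Dx : DifferentiableAt ℝ (mellinD^[n'] f) x := by
    have heq : mellinD^[n'] f =ᶠ[nhds x] fun z => ∑ k ∈ Finset.range (n' + 1),
        (stir n' k : ℝ) * z ^ k * iteratedDeriv k f z := by
      filter_upwards [hUopen.mem_nhds hxU] with z hz using
        mellin_iter_eq f U hUopen n' (fun k hk => hUdiff k hk) z hz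
    rw [heq.differentiableAt_iff]
    refine DifferentiableAt.fun_sum fun k hk => ?_
    refine ((differentiableAt_const _).mul (differentiableAt_pow k)).mul ?_
    have hk' := Finset.mem_range.mp hk
    rcases Nat.lt_or_ge k n' with h | h
    · exact hUdiff k h x hxU
    · have : k = n' := by omega
      rwa [this]
  -- preimage of U under exp
  set E : Set ℝ := Real.exp ⁻¹' U with hE
  have hEopen : IsOpen E := hUopen.preimage Real.continuous_exp
  have haE : a ∈ E := by simp [hE, Set.mem_preimage, hxa, hxU]
  -- identity of iterated derivatives of g
  have C : ∀ m ≤ n', ∀ s ∈ E, iteratedDeriv m g s = mellinD^[m] f (Real.exp s) := by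
    intro m
    induction m with
    | zero => intro _ s _; simp [iteratedDeriv_zero, hg]
    | succ m ih =>
      intro hm s hs
      have hmn : m < n' := by omega
      have heq : iteratedDeriv m g =ᶠ[nhds s] fun t => mellinD^[m] f (Real.exp t) := by
        filter_upwards [hEopen.mem_nhds hs] with t ht using ih (by omega) t ht
      have hcomp : HasDerivAt (fun t => mellinD^[m] f (Real.exp t))
          (deriv (mellinD^[m] f) (Real.exp s) * Real.exp s) s :=
        (Dm m hmn (Real.exp s) hs).hasDerivAt.comp s (Real.hasDerivAt_exp s)
      rw [iteratedDeriv_succ, heq.deriv_eq, hcomp.deriv]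
      rw [Function.iterate_succ_apply']
      show _ = Real.exp s * deriv (mellinD^[m] f) (Real.exp s)
      ring
  refine ⟨?_, ?_, ?_⟩
  · intro m hm
    filter_upwards [hEopen.mem_nhds haE] with s hs
    have heq : iteratedDeriv m g =ᶠ[nhds s] fun t => mellinD^[m] f (Real.exp t) := by
      filter_upwards [hEopen.mem_nhds hs] with t ht using C m (by omega) t ht
    rw [heq.differentiableAt_iff]
    exact (Dm m hm (Real.exp s) hs).comp s Real.differentiable_exp.differentiableAt
  · have heq : iteratedDeriv n' g =ᶠ[nhds a] fun t => mellinD^[n'] f (Real.exp t) := by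
      filter_upwards [hEopen.mem_nhds haE] with t ht using C n' le_rfl t ht
    rw [heq.differentiableAt_iff]
    have Dx' : DifferentiableAt ℝ (mellinD^[n'] f) (Real.exp a) := by rwa [hxa]
    exact Dx'.comp a Real.differentiable_exp.differentiableAt
  · intro j hj
    rcases Nat.lt_or_ge j (n' + 1) with h | h
    · rw [C j (by omega) a haE, hxa]
    · have hj' : j = n' + 1 := by omega
      subst hj'
      have heq : iteratedDeriv n' g =ᶠ[nhds a] fun t => mellinD^[n'] f (Real.exp t) := by
        filter_upwards [hEopen.mem_nhds haE] with t ht using C n' le_rfl t ht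
      have hcomp : HasDerivAt (fun t => mellinD^[n'] f (Real.exp t))
          (deriv (mellinD^[n'] f) (Real.exp a) * Real.exp a) a := by
        have Dx' : DifferentiableAt ℝ (mellinD^[n'] f) (Real.exp a) := by rwa [hxa]
        exact Dx'.hasDerivAt.comp a (Real.hasDerivAt_exp a)
      rw [iteratedDeriv_succ, heq.deriv_eq, hcomp.deriv, Function.iterate_succ_apply']
      show _ = x * deriv (mellinD^[n'] f) x
      rw [hxa]; ring


lemma summable_weight (ψ : ℤ → ℝ) (L : ℝ) (n : ℕ)
    (h : Summable fun k : ℤ => |ψ k| * |(k : ℝ) - L| ^ n) :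
    ∀ j ≤ n, Summable fun k : ℤ => |ψ k| * |(k : ℝ) - L| ^ j := by
  intro j hj
  set F : Set ℤ := {k : ℤ | |(k : ℝ) - L| < 1} with hFdef
  have hF : F.Finite := by
    refine (Set.finite_Icc (⌈L - 1⌉) (⌊L + 1⌋)).subset ?_
    intro k hk
    have : |(k : ℝ) - L| < 1 := hk
    rw [abs_lt] at this
    constructor
    · rw [Int.ceil_le]; linarith [this.1]
    · rw [Int.le_floor]; linarith [this.2]
  have hsum2 : Summable (fun k : ℤ => |ψ k| * |(k : ℝ) - L| ^ n + F.indicator (fun k => |ψ k|) k) := by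
    refine h.add (summable_of_finite_support ?_)
    exact hF.subset (Function.support_subset_iff'.mpr fun k hk => Set.indicator_of_notMem hk _)
  refine Summable.of_nonneg_of_le (fun k => by positivity) (fun k => ?_) hsum2
  rcases lt_or_ge (|(k : ℝ) - L|) 1 with hlt | hge
  · have h1 : |ψ k| * |(k : ℝ) - L| ^ j ≤ |ψ k| := by
      have := pow_le_one₀ (abs_nonneg _) hlt.le (n := j)
      nlinarith [abs_nonneg (ψ k)]
    have h2 : F.indicator (fun k => |ψ k|) k = |ψ k| := Set.indicator_of_mem (show k ∈ F from hlt) _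
    rw [h2]
    have : (0:ℝ) ≤ |ψ k| * |(k : ℝ) - L| ^ n := by positivity
    linarith
  · have h1 : |(k : ℝ) - L| ^ j ≤ |(k : ℝ) - L| ^ n :=
      pow_le_pow_right₀ hge hj
    have h2 : (0:ℝ) ≤ F.indicator (fun k => |ψ k|) k :=
      Set.indicator_nonneg (fun k _ => abs_nonneg _) _
    nlinarith [abs_nonneg (ψ k)]

/-- Voronovskaja-type asymptotic formula for the generalized exponential sampling series. -/
theorem voronovskaja
    (φ f : ℝ → ℝ) (n : ℕ) (hn : 1 ≤ n) (m : ℕ → ℝ)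
    (hφcont : ContinuousOn φ (Set.Ioi (0:ℝ)))
    (hpart : ∀ u : ℝ, 0 < u → ∑' k : ℤ, φ (Real.exp (-k) * u) = 1)
    (hsum : ∀ u : ℝ, 0 < u →
      Summable fun k : ℤ => |φ (Real.exp (-k) * u)| * |(k : ℝ) - Real.log u| ^ n)
    (hmom : ∀ j ≤ n, ∀ x : ℝ, 0 < x →
      ∑' k : ℤ, φ (Real.exp (-k) * x) * ((k : ℝ) - Real.log x) ^ j = m j)
    (hMn : ∃ M : ℝ, ∀ u : ℝ, 0 < u →
      ∑' k : ℤ, |φ (Real.exp (-k) * u)| * |(k : ℝ) - Real.log u| ^ n ≤ M)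
    (htail : ∀ ε > (0:ℝ), ∃ r₀ : ℝ, ∀ r ≥ r₀, ∀ u : ℝ, 0 < u →
      ∑' k : {k : ℤ // r < |(k : ℝ) - Real.log u|},
        |φ (Real.exp (-(k:ℤ)) * u)| * |((k:ℤ) : ℝ) - Real.log u| ^ n < ε)
    (hfbd : ∃ B : ℝ, ∀ x : ℝ, 0 < x → |f x| ≤ B)
    (hfcont : ContinuousOn f (Set.Ioi (0:ℝ)))
    (x : ℝ) (hx : 0 < x) (hf : LocallyCn n f x) :
    (fun w : ℝ => expSampling φ f w x - f x -
        ∑ j ∈ Finset.Icc 1 n, mellinD^[j] f x / (Nat.factorial j) * (m j / w ^ j))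
      =o[atTop] fun w : ℝ => (w ^ n)⁻¹ := by
  obtain ⟨n', rfl⟩ : ∃ n', n = n' + 1 := ⟨n - 1, by omega⟩
  set N := n' + 1 with hN
  set a := Real.log x with ha
  set g : ℝ → ℝ := fun s => f (Real.exp s) with hgdef
  have hf1 : ∀ m' < n', ∀ᶠ y in nhds x, DifferentiableAt ℝ (iteratedDeriv m' f) y := by
    have := hf.1; exact this
  have hf2 : DifferentiableAt ℝ (iteratedDeriv n' f) x := by
    have := hf.2; exact this
  obtain ⟨hA, hB', hC⟩ := mellin_transfer f x hx n' hf1 hf2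
  set c : ℕ → ℝ := fun j => mellinD^[j] f x with hc
  -- the Taylor remainder
  set P : ℝ → ℝ := fun s => ∑ j ∈ Finset.range (N + 1), c j * s ^ j / (j.factorial : ℝ) with hP
  set R : ℝ → ℝ := fun s => g (a + s) - P s with hRdef
  have hR : R =o[nhds 0] fun s : ℝ => s ^ N := by
    have := taylor_peano n' g a hA hB'
    refine this.congr (fun s => ?_) (fun s => rfl)
    simp only [hRdef, hP]
    congr 1
    exact Finset.sum_congr rfl fun j hj => by
      rw [hC j (by have := Finset.mem_range.mp hj; omega)]
  have hRsmall : ∀ ε > (0:ℝ), ∃ δ > (0:ℝ), ∀ s : ℝ, |s| ≤ δ → |R s| ≤ ε * |s| ^ N := by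
    intro ε hε
    have h2 := isLittleO_iff.mp hR hε
    rw [Metric.eventually_nhds_iff] at h2
    obtain ⟨δ, hδpos, hδ⟩ := h2
    refine ⟨δ / 2, by positivity, fun s hs => ?_⟩
    have := hδ (y := s) (by simp only [Real.dist_eq, sub_zero]; linarith)
    simpa [abs_pow] using this
  -- global bound for R
  obtain ⟨B, hBf⟩ := hfbd
  have hB0 : 0 ≤ B := le_trans (abs_nonneg _) (hBf x hx)
  set Cc : ℝ := ∑ j ∈ Finset.range (N + 1), |c j| / (j.factorial : ℝ) with hCc
  have hCc0 : 0 ≤ Cc := Finset.sum_nonneg fun j _ => by positivity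
  obtain ⟨δ₀, hδ₀pos, hδ₀⟩ := hRsmall 1 one_pos
  set δ₁ : ℝ := min δ₀ 1 with hδ₁def
  have hδ₁pos : 0 < δ₁ := lt_min hδ₀pos one_pos
  have hδ₁le1 : δ₁ ≤ 1 := min_le_right _ _
  set K : ℝ := (B + Cc) / δ₁ ^ N + 1 with hK
  have hK1 : 1 ≤ K := by
    have : (0:ℝ) ≤ (B + Cc) / δ₁ ^ N := by positivity
    rw [hK]; linarith
  have hKbd : ∀ s : ℝ, |R s| ≤ K * |s| ^ N := by
    intro s
    rcases le_or_gt (|s|) δ₁ with hle | hgt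
    · have := hδ₀ s (le_trans hle (min_le_left _ _))
      have hK' : |s| ^ N ≤ K * |s| ^ N := le_mul_of_one_le_left (by positivity) hK1
      linarith
    · -- |s| > δ₁
      have habsR : |R s| ≤ B + Cc * max 1 (|s| ^ N) := by
        have h1 : |g (a + s)| ≤ B := hBf _ (Real.exp_pos _)
        have h2 : |P s| ≤ Cc * max 1 (|s| ^ N) := by
          refine le_trans (Finset.abs_sum_le_sum_abs _ _) ?_
          rw [hCc, Finset.sum_mul]
          refine Finset.sum_le_sum fun j hj => ?_
          have hjN : j ≤ N := by have := Finset.mem_range.mp hj; omega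
          have hpow : |s| ^ j ≤ max 1 (|s| ^ N) := by
            rcases le_or_gt (|s|) 1 with h | h
            · exact le_trans (pow_le_one₀ (abs_nonneg _) h) (le_max_left _ _)
            · exact le_trans (pow_le_pow_right₀ h.le hjN) (le_max_right _ _)
          have : |c j * s ^ j / (j.factorial : ℝ)| = |c j| / (j.factorial : ℝ) * |s| ^ j := by
            rw [abs_div, abs_mul, abs_pow, Nat.abs_cast]
            ring
          rw [this]
          exact mul_le_mul_of_nonneg_left hpow (by positivity)
        calc |R s| ≤ |g (a + s)| + |P s| := abs_sub _ _
          _ ≤ B + Cc * max 1 (|s| ^ N) := add_le_add h1 h2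
      have hmax : max 1 (|s| ^ N) ≤ |s| ^ N / δ₁ ^ N := by
        rw [max_le_iff]
        constructor
        · rw [le_div_iff₀ (by positivity), one_mul]
          exact pow_le_pow_left₀ hδ₁pos.le hgt.le N
        · rw [le_div_iff₀ (by positivity)]
          nlinarith [pow_le_one₀ hδ₁pos.le hδ₁le1 (n := N), pow_pos hδ₁pos N,
            pow_nonneg (abs_nonneg s) N]
      calc |R s| ≤ B + Cc * max 1 (|s| ^ N) := habsR
        _ ≤ (B + Cc) * max 1 (|s| ^ N) := by nlinarith [le_max_left 1 (|s| ^ N)]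
        _ ≤ (B + Cc) * (|s| ^ N / δ₁ ^ N) := mul_le_mul_of_nonneg_left hmax (by linarith)
        _ = (B + Cc) / δ₁ ^ N * |s| ^ N := by ring
        _ ≤ K * |s| ^ N := by
            refine mul_le_mul_of_nonneg_right ?_ (by positivity)
            rw [hK]; linarith
  obtain ⟨M, hM⟩ := hMn
  have hM0 : 0 ≤ M := le_trans (tsum_nonneg fun k => by positivity) (hM 1 one_pos)
  have hm0 : m 0 = 1 := by
    rw [← hmom 0 (by omega) x hx]
    simpa using hpart x hx
  -- main estimate
  rw [isLittleO_iff]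
  intro cc hcc
  set ε : ℝ := cc / (M + K + 1) with hε
  have hεpos : 0 < ε := by
    apply div_pos hcc; linarith
  obtain ⟨δ, hδpos, hδ⟩ := hRsmall ε hεpos
  obtain ⟨r₀, hr₀⟩ := htail ε hεpos
  have hWpos : (0:ℝ) < (|r₀| + 1) / δ := by positivity
  filter_upwards [eventually_ge_atTop (max ((|r₀| + 1) / δ) 1)] with w hw
  have hw1 : 1 ≤ w := le_trans (le_max_right _ _) hw
  have hw0 : 0 < w := by linarith
  have hδw : r₀ ≤ δ * w := by
    have h1 : (|r₀| + 1) / δ ≤ w := le_trans (le_max_left _ _) hw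
    have := (div_le_iff₀ hδpos).mp h1
    calc r₀ ≤ |r₀| := le_abs_self _
      _ ≤ δ * w := by nlinarith
  -- setup
  set u : ℝ := x ^ w with hu
  have hupos : 0 < u := Real.rpow_pos_of_pos hx w
  have hlogu : Real.log u = w * a := Real.log_rpow hx w
  set φk : ℤ → ℝ := fun k => φ (Real.exp (-k) * u) with hφk
  set t : ℤ → ℝ := fun k => (k : ℝ) - Real.log u with ht
  have Sn : Summable fun k : ℤ => |φk k| * |t k| ^ N := hsum u hupos
  have Sj : ∀ j ≤ N, Summable fun k : ℤ => |φk k| * |t k| ^ j :=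
    summable_weight φk (Real.log u) N Sn
  -- the three pieces
  have habsRk : ∀ k : ℤ, |φk k * R (t k / w)| ≤ K / w ^ N * (|φk k| * |t k| ^ N) := by
    intro k
    rw [abs_mul]
    have h1 : |R (t k / w)| ≤ K * |t k / w| ^ N := hKbd _
    have h2 : |t k / w| ^ N = |t k| ^ N / w ^ N := by
      rw [abs_div, abs_of_pos hw0, div_pow]
    calc |φk k| * |R (t k / w)| ≤ |φk k| * (K * (|t k| ^ N / w ^ N)) := by
          rw [← h2]; exact mul_le_mul_of_nonneg_left h1 (abs_nonneg _)
      _ = K / w ^ N * (|φk k| * |t k| ^ N) := by ring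
  have SRabs : Summable fun k : ℤ => |φk k * R (t k / w)| :=
    Summable.of_nonneg_of_le (fun k => abs_nonneg _) habsRk (Sn.mul_left _)
  have SR : Summable fun k : ℤ => φk k * R (t k / w) := SRabs.of_abs
  have Sterm : ∀ j ≤ N, Summable fun k : ℤ => φk k * (t k / w) ^ j := by
    intro j hj
    refine Summable.of_abs ?_
    have : ∀ k : ℤ, |φk k * (t k / w) ^ j| = (w ^ j)⁻¹ * (|φk k| * |t k| ^ j) := by
      intro k
      rw [abs_mul, abs_pow, abs_div, abs_of_pos hw0, div_pow]
      ring
    exact (funext this : _) ▸ ((Sj j hj).mul_left _)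
  -- the tsum computation
  have hwne : w ≠ 0 := ne_of_gt hw0
  have hexp : expSampling φ f w x = ∑' k : ℤ, φk k * g (a + t k / w) := by
    rw [expSampling]
    refine tsum_congr fun k => ?_
    simp only [hφk, hgdef, ht, hlogu]
    have harg : a + ((k:ℝ) - w * a) / w = (k:ℝ) / w := by field_simp; ring
    rw [harg, mul_comm]
  have hsplit : ∑' k : ℤ, φk k * g (a + t k / w) =
      (∑ j ∈ Finset.range (N + 1), c j / (j.factorial : ℝ) * (m j / w ^ j)) +
        ∑' k : ℤ, φk k * R (t k / w) := by
    have hterm : ∀ k : ℤ, φk k * g (a + t k / w) =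
        (∑ j ∈ Finset.range (N + 1), c j / (j.factorial : ℝ) * (φk k * (t k / w) ^ j)) +
          φk k * R (t k / w) := by
      intro k
      have : g (a + t k / w) = P (t k / w) + R (t k / w) := by rw [hRdef]; ring
      rw [this, mul_add, hP, Finset.mul_sum]
      congr 1
      exact Finset.sum_congr rfl fun j _ => by ring
    rw [tsum_congr hterm]
    rw [Summable.tsum_add (summable_sum fun j hj => (Sterm j (by have := Finset.mem_range.mp hj; omega)).mul_left _) SR]
    congr 1
    rw [Summable.tsum_finsetSum (fun j hj => (Sterm j (by have := Finset.mem_range.mp hj; omega)).mul_left _)]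
    refine Finset.sum_congr rfl fun j hj => ?_
    have hjN : j ≤ N := by have := Finset.mem_range.mp hj; omega
    rw [tsum_mul_left]
    congr 1
    have : ∀ k : ℤ, φk k * (t k / w) ^ j = φk k * t k ^ j * (w ^ j)⁻¹ := by
      intro k; rw [div_pow]; ring
    rw [tsum_congr this, tsum_mul_right, hmom j hjN u hupos]
    rw [div_eq_mul_inv]
  -- rearranging to the target form
  have hmain : expSampling φ f w x - f x -
      (∑ j ∈ Finset.Icc 1 N, mellinD^[j] f x / (Nat.factorial j) * (m j / w ^ j)) =
      ∑' k : ℤ, φk k * R (t k / w) := by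
    rw [hexp, hsplit]
    have hins : Finset.range (N + 1) = insert 0 (Finset.Icc 1 N) := by
      ext j
      simp [Finset.mem_range, Finset.mem_Icc, Finset.mem_insert]
      omega
    rw [hins, Finset.sum_insert (by simp)]
    have h00 : c 0 / ((0:ℕ).factorial : ℝ) * (m 0 / w ^ 0) = f x := by
      rw [hm0, hc]
      simp [Function.iterate_zero]
    rw [h00]
    ring
  rw [hmain]
  -- the bound
  have SRnorm : Summable fun k : ℤ => ‖φk k * R (t k / w)‖ := by
    simpa only [Real.norm_eq_abs] using SRabs
  have hnorm : ‖∑' k : ℤ, φk k * R (t k / w)‖ ≤ ∑' k : ℤ, |φk k * R (t k / w)| := by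
    simpa only [Real.norm_eq_abs] using norm_tsum_le_tsum_norm SRnorm
  have key : ∑' k : ℤ, |φk k * R (t k / w)| ≤ (K + M) * ε / w ^ N := by
    set S : Set ℤ := {k : ℤ | δ * w < |(k : ℝ) - Real.log u|} with hS
    rw [← Summable.tsum_subtype_add_tsum_subtype_compl SRabs S]
    have htailb : ∑' k : ↥S, |φk (k:ℤ) * R (t (k:ℤ) / w)| ≤ K / w ^ N * ε := by
      have h1 : ∑' k : ↥S, |φk (k:ℤ) * R (t (k:ℤ) / w)| ≤
          ∑' k : ↥S, K / w ^ N * (|φk (k:ℤ)| * |t (k:ℤ)| ^ N) := by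
        refine Summable.tsum_le_tsum (fun k => habsRk _) (SRabs.subtype _) (((Sn.mul_left _)).subtype _)
      refine h1.trans ?_
      rw [tsum_mul_left]
      refine mul_le_mul_of_nonneg_left ?_ (by positivity)
      have := hr₀ (δ * w) hδw u hupos
      exact this.le
    have hheadb : ∑' k : ↥Sᶜ, |φk (k:ℤ) * R (t (k:ℤ) / w)| ≤ ε / w ^ N * M := by
      have h1 : ∀ k : ↥Sᶜ, |φk (k:ℤ) * R (t (k:ℤ) / w)| ≤
          ε / w ^ N * (|φk (k:ℤ)| * |t (k:ℤ)| ^ N) := by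
        intro ⟨k, hk⟩
        simp only [Set.mem_compl_iff, hS, Set.mem_setOf_eq, not_lt] at hk
        have hsk : |t k / w| ≤ δ := by
          rw [abs_div, abs_of_pos hw0, div_le_iff₀ hw0]
          exact hk
        have hRk : |R (t k / w)| ≤ ε * |t k / w| ^ N := hδ _ hsk
        rw [abs_mul]
        have h2 : |t k / w| ^ N = |t k| ^ N / w ^ N := by
          rw [abs_div, abs_of_pos hw0, div_pow]
        calc |φk k| * |R (t k / w)| ≤ |φk k| * (ε * (|t k| ^ N / w ^ N)) := by
              rw [← h2]; exact mul_le_mul_of_nonneg_left hRk (abs_nonneg _)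
          _ = ε / w ^ N * (|φk k| * |t k| ^ N) := by ring
      have h2 : ∑' k : ↥Sᶜ, |φk (k:ℤ) * R (t (k:ℤ) / w)| ≤
          ∑' k : ↥Sᶜ, ε / w ^ N * (|φk (k:ℤ)| * |t (k:ℤ)| ^ N) :=
        Summable.tsum_le_tsum h1 (SRabs.subtype _) ((Sn.mul_left _).subtype _)
      refine h2.trans ?_
      rw [tsum_mul_left]
      refine mul_le_mul_of_nonneg_left ?_ (by positivity)
      have h3 : ∑' k : ↥Sᶜ, (|φk (k:ℤ)| * |t (k:ℤ)| ^ N) ≤ ∑' k : ℤ, |φk k| * |t k| ^ N := by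
        rw [tsum_subtype Sᶜ (fun k : ℤ => |φk k| * |t k| ^ N)]
        refine Summable.tsum_le_tsum ?_ (Sn.indicator _) Sn
        intro k
        exact Set.indicator_le_self' (fun k _ => by positivity) k
      exact h3.trans (hM u hupos)
    calc ∑' k : ↥S, |φk (k:ℤ) * R (t (k:ℤ) / w)| + ∑' k : ↥Sᶜ, |φk (k:ℤ) * R (t (k:ℤ) / w)|
        ≤ K / w ^ N * ε + ε / w ^ N * M := add_le_add htailb hheadb
      _ = (K + M) * ε / w ^ N := by ring
  refine (hnorm.trans key).trans ?_
  have hwN : (0:ℝ) < w ^ N := by positivity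
  have h1 : (K + M) * ε ≤ cc := by
    rw [hε]
    calc (K + M) * (cc / (M + K + 1)) = cc * ((K + M) / (M + K + 1)) := by ring
      _ ≤ cc * 1 := by
          refine mul_le_mul_of_nonneg_left ?_ hcc.le
          rw [div_le_one (by linarith)]; linarith
      _ = cc := mul_one cc
  have h2 : ‖(w ^ N)⁻¹‖ = (w ^ N)⁻¹ := by
    rw [Real.norm_eq_abs, abs_of_pos (by positivity)]
  rw [h2, div_le_iff₀ hwN, mul_assoc, inv_mul_cancel₀ (ne_of_gt hwN), mul_one]
  exact h1
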